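/- Assume T^P eliminates imaginaries. Let A ⊆ C be a set with P^A ≺ P^C, and let a be a tuple in C. Then the following are equivalent: (i) A is complete and tp(a/A) ∈ S_*(A); (ii) dcl(A ∪ a) ∩ P^C = P^A; (iii) acl(A ∪ a) ∩ P^C = P^A. -/

import Mathlib

open FirstOrder FirstOrder.Language Cardinal

universe u

namespace OverPredicate

variable (L : FirstOrder.Language.{u, u}) (C : Type u) [L.Structure C] [L.IsRelational]
variable (P : L.Relations 1)

/-- The set of realizations of the distinguished predicate `P` in the monster model `C`. -/
def Pset : Set C := { x | Structure.RelMap P ![x] }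

/-- The induced `L`-structure on a subset of the monster model
(the language is relational, so every subset is a substructure). -/
def setStructure (A : Set C) : L.Structure A where
  funMap := fun f _ => isEmptyElim f
  RelMap := fun r x => Structure.RelMap r (fun i => (x i : C))

/-- Realization of a formula in the structure induced on a subset `A` of the monster. -/
def RealizeIn (A : Set C) {α : Type*} (φ : L.Formula α) (v : α → A) : Prop :=
  letI := setStructure L C A
  φ.Realize v

/-- Satisfaction of a sentence in the structure induced on a subset of the monster. -/
def SatIn (A : Set C) (σ : L.Sentence) : Prop :=
  RealizeIn L C A σ (fun e => isEmptyElim e)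

/-- `A ≡ B`: the substructures of `C` with universes `A` and `B` are elementarily
equivalent, i.e. `Th(C|_A) = Th(C|_B)`. -/
def ElemEquivSets (A B : Set C) : Prop := ∀ σ : L.Sentence, SatIn L C A σ ↔ SatIn L C B σ

/-- `A ≺ B` for subsets of the monster model. -/
def ElemSubset (A B : Set C) : Prop :=
  ∃ h : A ⊆ B, ∀ (m : ℕ) (φ : L.Formula (Fin m)) (x : Fin m → A),
    RealizeIn L C A φ x ↔ RealizeIn L C B φ (fun i => ⟨(x i : C), h (x i).2⟩)

/-- `M ≺ C`: the subset `M` is the universe of an elementary submodel of the monster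
model; in particular `M ⊨ T`. -/
def ElemInC (M : Set C) : Prop :=
  ∀ (m : ℕ) (φ : L.Formula (Fin m)) (x : Fin m → M),
    RealizeIn L C M φ x ↔ φ.Realize (fun i => (x i : C))

/-- Formulas with parameters in `A` and `n` free variables. -/
def FormulaOver (A : Set C) (n : ℕ) :=
  Σ m : ℕ, L.Formula (Fin n ⊕ Fin m) × (Fin m → A)

/-- The tuple `c` realizes (in the monster) the formula `χ` with parameters in `A`. -/
def Realizes (A : Set C) {n : ℕ} (c : Fin n → C) (χ : FormulaOver L C A n) : Prop :=
  χ.2.1.Realize (Sum.elim c (fun i => (χ.2.2 i : C)))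

/-- The complete type of the tuple `c` over the set `A`. -/
def typeOf (A : Set C) {n : ℕ} (c : Fin n → C) : Set (FormulaOver L C A n) :=
  { χ | Realizes L C A c χ }

/-- `c` realizes the partial type `p` over `A`. -/
def RealizesAll (A : Set C) {n : ℕ} (c : Fin n → C) (p : Set (FormulaOver L C A n)) : Prop :=
  ∀ χ ∈ p, Realizes L C A c χ

/-- A partial type over `A` is consistent iff it is realized in the monster model. -/
def Consistent (A : Set C) {n : ℕ} (p : Set (FormulaOver L C A n)) : Prop :=
  ∃ c : Fin n → C, RealizesAll L C A c p

/-- `A ⊆ C` is complete: whenever `C ⊨ (∃ x̄ ⊆ P) ψ(x̄, b̄)` with `b̄` from `A`, there is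
a witness `ā` from `P ∩ A`. -/
def IsComplete (A : Set C) : Prop :=
  ∀ (k m : ℕ) (ψ : L.Formula (Fin k ⊕ Fin m)) (b : Fin m → C), (∀ i, b i ∈ A) →
    (∃ x : Fin k → C, (∀ i, x i ∈ Pset L C P) ∧ ψ.Realize (Sum.elim x b)) →
    ∃ a : Fin k → C, (∀ i, a i ∈ Pset L C P ∩ A) ∧ ψ.Realize (Sum.elim a b)

/-- `S_*(A)`: complete types over `A` (in `n` variables) weakly orthogonal to `P`. -/
def SStar (A : Set C) (n : ℕ) : Set (Set (FormulaOver L C A n)) :=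
  { p | ∃ c : Fin n → C, p = typeOf L C A c ∧
      Pset L C P ∩ (A ∪ Set.range c) = Pset L C P ∩ A ∧
      IsComplete L C P (A ∪ Set.range c) }

/-- `A` is stable over `P`: for every `A'` elementarily equivalent to `A`,
`|S_*(A')| ≤ |A'| ^ |T|`. -/
def IsStableSet (A : Set C) : Prop :=
  ∀ B : Set C, ElemEquivSets L C A B →
    #(Σ n : ℕ, ↥(SStar L C P B n)) ≤ #↥B ^ (Language.card L + ℵ₀)

/-- `T` is fully stable over `P`: every complete set is stable over `P`. -/
def FullyStable : Prop := ∀ A : Set C, IsComplete L C P A → IsStableSet L C P A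

/-- `T` is fully stable over `N ⊨ T^P`: every complete set with `P`-part `N` is stable. -/
def FullyStableOverSet (N : Set C) : Prop :=
  ∀ A : Set C, IsComplete L C P A → Pset L C P ∩ A = N → IsStableSet L C P A

/-- `A` has the existence property over `P`. -/
def HasExistence (A : Set C) : Prop :=
  ∃ M : Set C, ElemInC L C M ∧ A ⊆ M ∧ Pset L C P ∩ M = Pset L C P ∩ A

/-- Hypothesis 1: (i) `P` is stably embedded; (ii) `0`-definable subsets of `P^C` are
`0`-definable in the induced structure `C^P`; (iii) `T` has quantifier elimination. -/
def Hypothesis1 : Prop :=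
  (∀ (k m : ℕ) (ψ : L.Formula (Fin k ⊕ Fin m)) (a : Fin k → C),
    ∃ (l : ℕ) (θ : L.Formula (Fin m ⊕ Fin l)) (c : Fin l → C),
      (∀ i, c i ∈ Pset L C P) ∧
      ∀ y : Fin m → C, (∀ i, y i ∈ Pset L C P) →
        (ψ.Realize (Sum.elim a y) ↔ θ.Realize (Sum.elim y c))) ∧
  (∀ (m : ℕ) (φ : L.Formula (Fin m)),
    (∀ x : Fin m → C, φ.Realize x → ∀ i, x i ∈ Pset L C P) →
    ∃ θ : L.Formula (Fin m),
      ∀ x : Fin m → ↥(Pset L C P),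
        (φ.Realize (fun i => (x i : C)) ↔ RealizeIn L C (Pset L C P) θ x)) ∧
  (∀ (m : ℕ) (φ : L.Formula (Fin m)), ∃ θ : L.Formula (Fin m),
    θ.IsQF ∧ ∀ x : Fin m → C, (φ.Realize x ↔ θ.Realize x))

/-- A system of uniform defining formulas `Ψ_ψ(ȳ, z̄)`, one for each `ψ(x̄, ȳ)`. -/
def UniformDefs :=
  ∀ (k m : ℕ), L.Formula (Fin k ⊕ Fin m) → Σ l : ℕ, L.Formula (Fin m ⊕ Fin l)

/-- `U` is a system of uniform definitions of `ψ`-types over `P`. -/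
def IsUniformDefs (U : UniformDefs L) : Prop :=
  ∀ (k m : ℕ) (ψ : L.Formula (Fin k ⊕ Fin m)) (a : Fin k → C),
    ∃ c : Fin (U k m ψ).1 → C, (∀ i, c i ∈ Pset L C P) ∧
      ∀ y : Fin m → C, (∀ i, y i ∈ Pset L C P) →
        (ψ.Realize (Sum.elim a y) ↔ (U k m ψ).2.Realize (Sum.elim y c))

/-- Semantic implication between partial types over `A`. -/
def ImpliesSet (A : Set C) {n : ℕ} (r p : Set (FormulaOver L C A n)) : Prop :=
  ∀ c : Fin n → C, RealizesAll L C A c r → RealizesAll L C A c p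

/-- The restriction `p ↾ φ` of a type to instances (or negated instances) of `φ`. -/
def restrictTo (A : Set C) {n : ℕ} (p : Set (FormulaOver L C A n)) (m : ℕ)
    (φ : L.Formula (Fin n ⊕ Fin m)) : Set (FormulaOver L C A n) :=
  { χ ∈ p | ∃ b : Fin m → A, χ = ⟨m, φ, b⟩ ∨ χ = ⟨m, φ.not, b⟩ }

/-- A type over `A` is locally isolated if each of its restrictions `p ↾ φ` is
implied by a single formula in `p`. -/
def LocallyIsolated (A : Set C) {n : ℕ} (p : Set (FormulaOver L C A n)) : Prop :=
  ∀ (m : ℕ) (φ : L.Formula (Fin n ⊕ Fin m)),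
    ∃ θ ∈ p, ImpliesSet L C A {θ} (restrictTo L C A p m φ)

/-- A type `p` is `λ`-isolated if it is implied by a subset of size `< λ`. -/
def LambdaIsolated (A : Set C) {n : ℕ} (lam : Cardinal.{u})
    (p : Set (FormulaOver L C A n)) : Prop :=
  ∃ r ⊆ p, #↥r < lam ∧ ImpliesSet L C A r p

/-- `D` is locally constructible over `B`. -/
def LocallyConstructible (B D : Set C) : Prop :=
  B ⊆ D ∧ ∃ (α : Ordinal.{u}) (d : Ordinal.{u} → C),
    D = B ∪ d '' Set.Iio α ∧
    ∀ i < α, LocallyIsolated L C (B ∪ d '' Set.Iio i)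
      (typeOf L C (B ∪ d '' Set.Iio i) (fun _ : Fin 1 => d i))

/-- Relativized universal quantification: `(∀ z̄ ⊆ P) θ(·, z̄)`. -/
noncomputable def pAlls {α : Type*} (l : ℕ) (θ : L.Formula (α ⊕ Fin l)) : L.Formula α :=
  Formula.iAlls (Fin l)
    ((List.finRange l).foldr
      (fun j acc => (Relations.formula P ![Term.var (Sum.inr j)]).imp acc) θ)

/-- Relativized existential quantification: `(∃ z̄ ⊆ P) θ(·, z̄)`. -/
noncomputable def pExs {α : Type*} (l : ℕ) (θ : L.Formula (α ⊕ Fin l)) : L.Formula α :=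
  Formula.iExs (Fin l)
    ((List.finRange l).foldr
      (fun j acc => (Relations.formula P ![Term.var (Sum.inr j)]) ⊓ acc) θ)

/-- Standardize a formula `ψ(x̄, ȳ, z̄)` to the shape `ψ(w̄, z̄)` used for uniform definitions. -/
def psiStd {n m l : ℕ} (ψ : L.Formula ((Fin n ⊕ Fin m) ⊕ Fin l)) :
    L.Formula (Fin (n + m) ⊕ Fin l) :=
  ψ.relabel (Sum.map (⇑finSumFinEquiv) id)

/-- The number of parameters of the uniform definition of `ψ`. -/
def defLen (U : UniformDefs L) {n m l : ℕ} (ψ : L.Formula ((Fin n ⊕ Fin m) ⊕ Fin l)) : ℕ :=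
  (U (n + m) l (psiStd L ψ)).1

/-- The uniform defining formula `Ψ_ψ(z̄, w̄)` for `ψ(x̄, ȳ, z̄)`. -/
def defFml (U : UniformDefs L) {n m l : ℕ} (ψ : L.Formula ((Fin n ⊕ Fin m) ⊕ Fin l)) :
    L.Formula (Fin l ⊕ Fin (defLen L U ψ)) :=
  (U (n + m) l (psiStd L ψ)).2

/-- Combine two parameter tuples into one. -/
def combParams {γ : Type*} {m l : ℕ} (b : Fin m → γ) (d : Fin l → γ) : Fin (m + l) → γ :=
  fun i => Sum.elim b d (finSumFinEquiv.symm i)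

/-- The formula `(∀ z̄ ⊆ P) [ψ(x̄, ȳ, z̄) ↔ Ψ_ψ(z̄, w̄)]`, with free variables `x̄` and
parameter slots `ȳ w̄`. -/
noncomputable def eqDefFormula (U : UniformDefs L) {n m l : ℕ}
    (ψ : L.Formula ((Fin n ⊕ Fin m) ⊕ Fin l)) :
    L.Formula (Fin n ⊕ Fin (m + defLen L U ψ)) :=
  pAlls L P l
    ((ψ.relabel (fun v => match v with
        | Sum.inl (Sum.inl i) => Sum.inl (Sum.inl i)
        | Sum.inl (Sum.inr j) => Sum.inl (Sum.inr (Fin.castAdd (defLen L U ψ) j))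
        | Sum.inr z => Sum.inr z)).iff
      ((defFml L U ψ).relabel (fun v => match v with
        | Sum.inl z => Sum.inr z
        | Sum.inr j => Sum.inl (Sum.inr (Fin.natAdd m j)))))

/-- The formula `[(∃ z̄ ⊆ P) ψ(x̄, ȳ, z̄)] → ψ(x̄, ȳ, z̄')`, with free variables `x̄` and
parameter slots `ȳ z̄'`. -/
noncomputable def exImpFormula {n m l : ℕ}
    (ψ : L.Formula ((Fin n ⊕ Fin m) ⊕ Fin l)) :
    L.Formula (Fin n ⊕ Fin (m + l)) :=
  (pExs L P l (ψ.relabel (fun v => match v with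
      | Sum.inl (Sum.inl i) => Sum.inl (Sum.inl i)
      | Sum.inl (Sum.inr j) => Sum.inl (Sum.inr (Fin.castAdd l j))
      | Sum.inr z => Sum.inr z))).imp
    (ψ.relabel (fun v => match v with
      | Sum.inl (Sum.inl i) => Sum.inl i
      | Sum.inl (Sum.inr j) => Sum.inr (Fin.castAdd l j)
      | Sum.inr z => Sum.inr (Fin.natAdd m z)))

/-- `r` is a `Δ`-type over `A`. -/
def IsDeltaType (A : Set C) {n : ℕ} (Δ : Set (Σ m : ℕ, L.Formula (Fin n ⊕ Fin m)))
    (r : Set (FormulaOver L C A n)) : Prop :=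
  ∀ χ ∈ r, ∃ ψ ∈ Δ, ∃ b : Fin ψ.1 → A,
    χ = ⟨ψ.1, ψ.2, b⟩ ∨ χ = ⟨ψ.1, ψ.2.not, b⟩

/-- `r` and `s` are explicitly contradictory. -/
def ExplicitlyContradictory (A : Set C) {n : ℕ}
    (r s : Set (FormulaOver L C A n)) : Prop :=
  ∃ (m : ℕ) (ψ : L.Formula (Fin n ⊕ Fin m)) (b : Fin m → A),
    (⟨m, ψ, b⟩ : FormulaOver L C A n) ∈ r ∧ (⟨m, ψ.not, b⟩ : FormulaOver L C A n) ∈ s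

/-- The rank `R^n_A(p, Δ₁, Δ₂, λ) ≥ β` (for finite `β`), relative to a fixed system `U`
of uniform defining formulas. -/
noncomputable def RankGE (U : UniformDefs L) (A : Set C) (n : ℕ)
    (Δ₁ : Set (Σ m : ℕ, L.Formula (Fin n ⊕ Fin m)))
    (Δ₂ : Set (Σ m : ℕ, Σ l : ℕ, L.Formula ((Fin n ⊕ Fin m) ⊕ Fin l)))
    (lam : Cardinal.{u}) : ℕ → Set (FormulaOver L C A n) → Prop
  | 0, p => Consistent L C A p
  | (β + 1), p =>
      if Even β then
        ∀ μ : Ordinal.{u}, μ.card < lam → ∀ q ⊆ p, q.Finite →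
          ∃ r : { i : Ordinal.{u} // i ≤ μ } → Set (FormulaOver L C A n),
            (∀ i, IsDeltaType L C A Δ₁ (r i)) ∧
            (∀ i j, i ≠ j → ExplicitlyContradictory L C A (r i) (r j)) ∧
            (∀ i, RankGE U A n Δ₁ Δ₂ lam β (q ∪ r i))
      else
        ∀ μ : Ordinal.{u}, μ.card < lam → ∀ q ⊆ p, q.Finite →
          ∀ ψ : { i : Ordinal.{u} // i ≤ μ } →
              (Σ m : ℕ, Σ l : ℕ, L.Formula ((Fin n ⊕ Fin m) ⊕ Fin l)),
            (∀ i, ψ i ∈ Δ₂) →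
            ∀ b : ∀ i, Fin (ψ i).1 → A,
              ∃ d : ∀ i, Fin (defLen L U (ψ i).2.2) → ↥(Pset L C P ∩ A),
                RankGE U A n Δ₁ Δ₂ lam β
                  (q ∪ Set.range fun i =>
                    (⟨(ψ i).1 + defLen L U (ψ i).2.2, eqDefFormula L P U (ψ i).2.2,
                      combParams (b i) (fun j => (⟨(d i j : C), (d i j).2.2⟩ : A))⟩ :
                      FormulaOver L C A n))

/-- The definable closure of `A` in the monster model. -/
def dclSet (A : Set C) : Set C :=
  { b | ∃ (k : ℕ) (φ : L.Formula (Fin 1 ⊕ Fin k)) (a : Fin k → A),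
      φ.Realize (Sum.elim (fun _ => b) (fun i => (a i : C))) ∧
      ∀ b' : C, φ.Realize (Sum.elim (fun _ => b') (fun i => (a i : C))) → b' = b }

/-- The algebraic closure of `A` in the monster model. -/
def aclSet (A : Set C) : Set C :=
  { b | ∃ (k : ℕ) (φ : L.Formula (Fin 1 ⊕ Fin k)) (a : Fin k → A),
      φ.Realize (Sum.elim (fun _ => b) (fun i => (a i : C))) ∧
      { b' : C | φ.Realize (Sum.elim (fun _ => b') (fun i => (a i : C))) }.Finite }

/-- `T^P` eliminates imaginaries: every subset of a power of `P^C` definable with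
parameters in the induced structure `C^P` has a code there. -/
def EliminatesImaginariesP : Prop :=
  ∀ (n : ℕ) (X : Set (Fin n → ↥(Pset L C P))),
    (∃ (k : ℕ) (ψ : L.Formula (Fin n ⊕ Fin k)) (b : Fin k → ↥(Pset L C P)),
        ∀ x, x ∈ X ↔ RealizeIn L C (Pset L C P) ψ (Sum.elim x b)) →
    ∃ (l : ℕ) (φ : L.Formula (Fin n ⊕ Fin l)) (c : Fin l → ↥(Pset L C P)),
      (∀ x, x ∈ X ↔ RealizeIn L C (Pset L C P) φ (Sum.elim x c)) ∧
      ∀ c' : Fin l → ↥(Pset L C P),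
        (∀ x, x ∈ X ↔ RealizeIn L C (Pset L C P) φ (Sum.elim x c')) → c' = c

/-- The subset `N` of the monster is `λ`-saturated (as an `L`-structure). -/
def IsSaturatedSet (N : Set C) (lam : Cardinal.{u}) : Prop :=
  ∀ p : Set (Σ k : ℕ, L.Formula (Fin 1 ⊕ Fin k) × (Fin k → N)),
    #↥p < lam →
    (∀ q ⊆ p, q.Finite →
       ∃ c : N, ∀ χ ∈ q, RealizeIn L C N χ.2.1 (Sum.elim (fun _ : Fin 1 => c) χ.2.2)) →
    ∃ c : N, ∀ χ ∈ p, RealizeIn L C N χ.2.1 (Sum.elim (fun _ : Fin 1 => c) χ.2.2)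

/-- `f` is a partial elementary map from `D` into the monster model. -/
def PartialElemMap (D : Set C) (f : D → C) : Prop :=
  ∀ (m : ℕ) (φ : L.Formula (Fin m)) (x : Fin m → D),
    φ.Realize (fun i => ((x i) : C)) ↔ φ.Realize (fun i => f (x i))


lemma term_realize_coe {α : Type*} (S : Set C) (t : L.Term α) (v : α → S) :
    ((@Term.realize L _ (setStructure L C S) _ v t : S) : C) = t.realize (fun a => (v a : C)) := by
  induction t with
  | var => rfl
  | func f ts ih => exact isEmptyElim f

variable {L C} in
def relToP (P : L.Relations 1) {α : Type*} : ∀ {n : ℕ}, L.BoundedFormula α n → L.BoundedFormula α n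
  | _, BoundedFormula.falsum => BoundedFormula.falsum
  | _, BoundedFormula.equal t u => BoundedFormula.equal t u
  | _, BoundedFormula.rel R ts => BoundedFormula.rel R ts
  | _, BoundedFormula.imp f g => BoundedFormula.imp (relToP P f) (relToP P g)
  | n, BoundedFormula.all f =>
      BoundedFormula.all ((Relations.boundedFormula₁ P (Term.var (Sum.inr (Fin.last n)))).imp (relToP P f))

lemma realize_relToP {α : Type*} {n : ℕ} (φ : L.BoundedFormula α n) :
    ∀ (v : α → Pset L C P) (xs : Fin n → Pset L C P),
      @BoundedFormula.Realize L _ (setStructure L C (Pset L C P)) α n φ v xs ↔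
        (relToP P φ).Realize (fun a => (v a : C)) (fun i => (xs i : C)) := by
  letI := setStructure L C (Pset L C P)
  have hco : ∀ {n : ℕ} (v : α → Pset L C P) (xs : Fin n → Pset L C P),
      (fun a => ((Sum.elim v xs a : Pset L C P) : C)) =
        Sum.elim (fun a => ((v a : Pset L C P) : C)) (fun i => ((xs i : Pset L C P) : C)) := by
    intro n v xs; funext a; cases a <;> rfl
  induction φ with
  | falsum => intro v xs; exact Iff.rfl
  | equal t u =>
      intro v xs
      show (Term.realize (Sum.elim v xs) t = Term.realize (Sum.elim v xs) u) ↔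
        (Term.realize _ t = Term.realize _ u)
      rw [Subtype.ext_iff, term_realize_coe, term_realize_coe, hco]
  | rel R ts =>
      intro v xs
      show Structure.RelMap R (fun i => ((Term.realize (Sum.elim v xs) (ts i) : Pset L C P) : C)) ↔
        Structure.RelMap R fun i => Term.realize _ (ts i)
      have hts : (fun i => ((Term.realize (Sum.elim v xs) (ts i) : Pset L C P) : C)) =
          (fun i => Term.realize (Sum.elim (fun a => ((v a : Pset L C P) : C))
            (fun i => ((xs i : Pset L C P) : C))) (ts i)) := by
        funext i; rw [term_realize_coe, hco]
      rw [hts]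
  | imp f g ihf ihg =>
      intro v xs
      show (BoundedFormula.Realize f v xs → BoundedFormula.Realize g v xs) ↔ _
      rw [ihf v xs, ihg v xs]; rfl
  | @all n f ih =>
      intro v xs
      show (∀ y : Pset L C P, BoundedFormula.Realize f v (Fin.snoc xs y)) ↔ _
      rw [show relToP P (BoundedFormula.all f) =
        BoundedFormula.all ((Relations.boundedFormula₁ P (Term.var (Sum.inr (Fin.last n)))).imp
          (relToP P f)) from rfl]
      rw [BoundedFormula.realize_all]
      constructor
      · intro h y
        rw [BoundedFormula.realize_imp, BoundedFormula.realize_rel₁]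
        intro hy
        simp only [Term.realize_var, Sum.elim_inr, Fin.snoc_last] at hy
        have hy' : y ∈ Pset L C P := hy
        have h3 := (ih v (Fin.snoc xs (⟨y, hy'⟩ : ↥(Pset L C P)))).mp (h (⟨y, hy'⟩ : ↥(Pset L C P)))
        have hsn : (fun i => (((Fin.snoc xs (⟨y, hy'⟩ : ↥(Pset L C P)) : Fin (n+1) → ↥(Pset L C P)) i : ↥(Pset L C P)) : C)) =
            Fin.snoc (fun i => ((xs i : Pset L C P) : C)) y := by
          funext i
          exact congrFun (Fin.comp_snoc Subtype.val xs (⟨y, hy'⟩ : ↥(Pset L C P))) i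
        rwa [hsn] at h3
      · intro h y
        have := h (y : C)
        rw [BoundedFormula.realize_imp, BoundedFormula.realize_rel₁] at this
        simp only [Term.realize_var, Sum.elim_inr, Fin.snoc_last] at this
        have h2 := this y.2
        rw [ih v (Fin.snoc xs y)]
        have hsn : (fun i => (((Fin.snoc xs y : Fin (n+1) → ↥(Pset L C P)) i : ↥(Pset L C P)) : C)) =
            Fin.snoc (fun i => ((xs i : Pset L C P) : C)) (y : C) := by
          funext i
          exact congrFun (Fin.comp_snoc Subtype.val xs y) i
        rwa [hsn]


namespace Tools

variable {L C P}

lemma realizeIn_iff_relToP {α : Type*} (φ : L.Formula α) (v : α → Pset L C P) :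
    RealizeIn L C (Pset L C P) φ v ↔
      Formula.Realize (M := C) (relToP P φ) (fun a => (v a : C)) := by
  have := realize_relToP L C P (n := 0) φ v finZeroElim
  unfold RealizeIn Formula.Realize
  convert this using 2 <;> apply Subsingleton.elim

lemma realizeIn_relabel {S : Set C} {α β : Type*} (φ : L.Formula α) (g : α → β) (v : β → S) :
    RealizeIn L C S (φ.relabel g) v ↔ RealizeIn L C S φ (v ∘ g) := by
  letI := setStructure L C S
  exact Formula.realize_relabel

lemma realizeIn_iExs {S : Set C} {α β γ : Type*} [Finite γ] (f : α → β ⊕ γ)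
    (φ : L.Formula α) (v : β → S) :
    RealizeIn L C S (Formula.iExs γ (φ.relabel f)) v ↔
      ∃ g : γ → S, RealizeIn L C S φ (fun a => Sum.elim v g (f a)) := by
  letI := setStructure L C S
  exact Formula.realize_iExs.trans (exists_congr fun g => Formula.realize_relabel)

/-- Finite conjunction. -/
def conjList {α : Type*} : List (L.Formula α) → L.Formula α
  | [] => ⊤
  | f :: l => f ⊓ conjList l

lemma realize_conjList {M : Type*} [L.Structure M] {α : Type*} (l : List (L.Formula α))
    (v : α → M) : (conjList l).Realize v ↔ ∀ f ∈ l, f.Realize v := by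
  induction l with
  | nil => simp [conjList]
  | cons f l ih => simp [conjList, Formula.realize_inf, ih]

/-- The guard formula `P(x)`. -/
def pguard (P : L.Relations 1) {α : Type*} (x : α) : L.Formula α :=
  Relations.formula P ![Term.var x]

lemma realize_pguard {α : Type*} (x : α) (v : α → C) :
    (pguard P x).Realize v ↔ v x ∈ Pset L C P := by
  rw [pguard, Formula.realize_rel]
  have : (fun i => Term.realize v ((![Term.var x] : Fin 1 → L.Term α) i)) = ![v x] := by
    funext i
    fin_cases i <;> rfl
  rw [this]
  exact Iff.rfl

/-- Relativized universal quantifier `(∀ x̄ ⊆ P) θ`. -/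
noncomputable def pAllP (P : L.Relations 1) {β : Type*} (k : ℕ) (θ : L.Formula (Fin k ⊕ β)) :
    L.Formula β :=
  Formula.iAlls (Fin k)
    (((conjList ((List.finRange k).map fun i => pguard P (Sum.inl i))).imp θ).relabel
      (Sum.elim Sum.inr Sum.inl))

lemma realize_pAllP {β : Type*} (k : ℕ) (θ : L.Formula (Fin k ⊕ β)) (v : β → C) :
    (pAllP P k θ).Realize v ↔
      ∀ x : Fin k → C, (∀ i, x i ∈ Pset L C P) → θ.Realize (Sum.elim x v) := by
  rw [pAllP, Formula.realize_iAlls]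
  apply forall_congr'
  intro x
  have he : (fun a => Sum.elim v x (Sum.elim Sum.inr Sum.inl a)) = Sum.elim x v := by
    funext a; cases a <;> rfl
  simp only [Formula.realize_relabel, Function.comp_def]
  rw [he, Formula.realize_imp, realize_conjList]
  constructor
  · intro h hP
    exact h (by
      intro f hf
      simp only [List.mem_map, List.mem_finRange] at hf
      obtain ⟨i, -, rfl⟩ := hf
      rw [realize_pguard]
      exact hP i)
  · intro h hall
    apply h
    intro i
    have := hall (pguard P (Sum.inl i)) (by simp [List.mem_map])
    rwa [realize_pguard] at this

/-- Relativized existential quantifier `(∃ x̄ ⊆ P) θ`. -/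
noncomputable def pExP (P : L.Relations 1) {β : Type*} (k : ℕ) (θ : L.Formula (Fin k ⊕ β)) :
    L.Formula β :=
  Formula.iExs (Fin k)
    (((conjList ((List.finRange k).map fun i => pguard P (Sum.inl i))) ⊓ θ).relabel
      (Sum.elim Sum.inr Sum.inl))

lemma realize_pExP {β : Type*} (k : ℕ) (θ : L.Formula (Fin k ⊕ β)) (v : β → C) :
    (pExP P k θ).Realize v ↔
      ∃ x : Fin k → C, (∀ i, x i ∈ Pset L C P) ∧ θ.Realize (Sum.elim x v) := by
  rw [pExP, Formula.realize_iExs]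
  apply exists_congr
  intro x
  have he : (fun a => Sum.elim v x (Sum.elim Sum.inr Sum.inl a)) = Sum.elim x v := by
    funext a; cases a <;> rfl
  simp only [Formula.realize_relabel, Function.comp_def]
  rw [he, Formula.realize_inf, realize_conjList]
  constructor
  · rintro ⟨h1, h2⟩
    refine ⟨fun i => ?_, h2⟩
    have := h1 (pguard P (Sum.inl i)) (by simp [List.mem_map])
    rwa [realize_pguard] at this
  · rintro ⟨h1, h2⟩
    refine ⟨?_, h2⟩
    intro f hf
    simp only [List.mem_map, List.mem_finRange] at hf
    obtain ⟨i, -, rfl⟩ := hf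
    rw [realize_pguard]
    exact h1 i

/-- `t` distinct solutions of `φ`. -/
noncomputable def distinctφ (t k : ℕ) (φ : L.Formula (Fin 1 ⊕ Fin k)) :
    L.Formula (Fin t ⊕ Fin k) :=
  (conjList ((List.finRange t).map fun i =>
      φ.relabel (Sum.elim (fun _ => Sum.inl i) Sum.inr))) ⊓
  (conjList ((((List.finRange t).product (List.finRange t)).filter
      (fun p => decide (p.1 ≠ p.2))).map fun p =>
      Formula.not (Term.equal (Term.var (Sum.inl p.1)) (Term.var (Sum.inl p.2)))))

lemma realize_distinctφ {t k : ℕ} (φ : L.Formula (Fin 1 ⊕ Fin k)) (x : Fin t → C)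
    (y : Fin k → C) :
    (distinctφ t k φ).Realize (Sum.elim x y) ↔
      (∀ i, φ.Realize (Sum.elim (fun _ => x i) y)) ∧
      (∀ i j, i ≠ j → x i ≠ x j) := by
  rw [distinctφ, Formula.realize_inf, realize_conjList, realize_conjList]
  constructor
  · rintro ⟨h1, h2⟩
    constructor
    · intro i
      have := h1 _ (by simp [List.mem_map] : (φ.relabel (Sum.elim (fun _ => Sum.inl i) Sum.inr))
        ∈ (List.finRange t).map fun i => φ.relabel (Sum.elim (fun _ => Sum.inl i) Sum.inr))
      rw [Formula.realize_relabel] at this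
      have he : (Sum.elim x y) ∘ (Sum.elim (fun _ : Fin 1 => Sum.inl i) Sum.inr) =
          Sum.elim (fun _ : Fin 1 => x i) y := by funext a; cases a <;> rfl
      rwa [he] at this
    · intro i j hij
      have hm : ((i, j)) ∈ ((List.finRange t).product (List.finRange t)).filter
          (fun p => decide (p.1 ≠ p.2)) := by
        rw [List.mem_filter]
        exact ⟨by simp [List.pair_mem_product], by simpa using hij⟩
      have := h2 _ (List.mem_map.mpr ⟨(i, j), hm, rfl⟩)
      rw [Formula.realize_not, Formula.realize_equal] at this
      simpa [Term.realize] using this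
  · rintro ⟨h1, h2⟩
    constructor
    · intro f hf
      simp only [List.mem_map, List.mem_finRange] at hf
      obtain ⟨i, -, rfl⟩ := hf
      rw [Formula.realize_relabel]
      have he : (Sum.elim x y) ∘ (Sum.elim (fun _ : Fin 1 => Sum.inl i) Sum.inr) =
          Sum.elim (fun _ : Fin 1 => x i) y := by funext a; cases a <;> rfl
      rw [he]
      exact h1 i
    · intro f hf
      simp only [List.mem_map, List.mem_filter, List.pair_mem_product, List.mem_finRange] at hf
      obtain ⟨⟨i, j⟩, hij, rfl⟩ := hf
      rw [Formula.realize_not, Formula.realize_equal]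
      have : i ≠ j := by simpa using hij
      simpa [Term.realize] using h2 i j this

end Tools

section MainHelpers

variable {L C P}

lemma mem_dclSet_of_mem {D : Set C} {b : C} (hb : b ∈ D) : b ∈ dclSet L C D := by
  refine ⟨1, Term.equal (Term.var (Sum.inl 0)) (Term.var (Sum.inr 0)),
    fun _ => ⟨b, hb⟩, ?_, ?_⟩
  · rw [Formula.realize_equal]
    rfl
  · intro b' hb'
    rw [Formula.realize_equal] at hb'
    exact hb'

lemma dclSet_subset_aclSet {D : Set C} : dclSet L C D ⊆ aclSet L C D := by
  rintro b ⟨k, φ, prms, h1, h2⟩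
  refine ⟨k, φ, prms, h1, Set.Finite.subset (Set.finite_singleton b) ?_⟩
  intro b' hb'
  exact h2 b' hb'

lemma inter_union_range {A : Set C} {n : ℕ} {a : Fin n → C}
    (hd : dclSet L C (A ∪ Set.range a) ∩ Pset L C P = Pset L C P ∩ A) :
    Pset L C P ∩ (A ∪ Set.range a) = Pset L C P ∩ A := by
  ext x
  constructor
  · rintro ⟨hP, hA | hR⟩
    · exact ⟨hP, hA⟩
    · rw [← hd]
      exact ⟨mem_dclSet_of_mem (Or.inr hR), hP⟩
  · rintro ⟨hP, hA⟩
    exact ⟨hP, Or.inl hA⟩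

lemma key_complete
    (h1 : Hypothesis1 L C P) (hEI : EliminatesImaginariesP L C P)
    {A : Set C} (hPA : ElemSubset L C (Pset L C P ∩ A) (Pset L C P))
    {n : ℕ} {a : Fin n → C}
    (hd : dclSet L C (A ∪ Set.range a) ∩ Pset L C P = Pset L C P ∩ A) :
    IsComplete L C P (A ∪ Set.range a) := by
  obtain ⟨hse, hind, -⟩ := h1
  intro k m ψ b hb hex
  obtain ⟨x0, hx0P, hx0r⟩ := hex
  -- Step B : stable embeddedness
  obtain ⟨l, θ, c, hcP, hθ⟩ := hse m k (ψ.relabel (Sum.elim Sum.inr Sum.inl)) b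
  have hθ' : ∀ y : Fin k → C, (∀ i, y i ∈ Pset L C P) →
      (ψ.Realize (Sum.elim y b) ↔ θ.Realize (Sum.elim y c)) := by
    intro y hy
    have h0 := hθ y hy
    rw [Formula.realize_relabel] at h0
    have he : (Sum.elim b y) ∘ (Sum.elim Sum.inr Sum.inl) = Sum.elim y b := by
      funext v; cases v <;> rfl
    rwa [he] at h0
  -- Step C : the induced structure definition
  set φfull : L.Formula (Fin (k + l)) :=
    (Tools.conjList ((List.finRange (k + l)).map fun i => Tools.pguard P i)) ⊓
      (θ.relabel ⇑finSumFinEquiv) with hφfull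
  have hφfull_real : ∀ w : Fin (k + l) → C, φfull.Realize w ↔
      ((∀ i, w i ∈ Pset L C P) ∧ θ.Realize (w ∘ ⇑finSumFinEquiv)) := by
    intro w
    rw [hφfull, Formula.realize_inf, Formula.realize_relabel, Tools.realize_conjList]
    constructor
    · rintro ⟨h1', h2'⟩
      refine ⟨fun i => ?_, h2'⟩
      have := h1' (Tools.pguard P i) (by simp [List.mem_map])
      rwa [Tools.realize_pguard] at this
    · rintro ⟨h1', h2'⟩
      refine ⟨?_, h2'⟩
      intro f hf
      simp only [List.mem_map, List.mem_finRange] at hf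
      obtain ⟨i, -, rfl⟩ := hf
      rw [Tools.realize_pguard]
      exact h1' i
  obtain ⟨θ'', hθ''⟩ := hind (k + l) φfull
    (fun w hw => ((hφfull_real w).mp hw).1)
  set cP : Fin l → ↥(Pset L C P) := fun i => ⟨c i, hcP i⟩ with hcPdef
  set X : Set (Fin k → ↥(Pset L C P)) :=
    { x | ψ.Realize (Sum.elim (fun i => ((x i : C))) b) } with hX
  set θ''' : L.Formula (Fin k ⊕ Fin l) := θ''.relabel ⇑finSumFinEquiv.symm with hθ'''
  have hXdef : ∀ x : Fin k → ↥(Pset L C P),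
      x ∈ X ↔ RealizeIn L C (Pset L C P) θ''' (Sum.elim x cP) := by
    intro x
    rw [hθ''', Tools.realizeIn_relabel]
    rw [← hθ'' ((Sum.elim x cP) ∘ ⇑finSumFinEquiv.symm)]
    rw [hφfull_real]
    have e2 : ((fun i => (((Sum.elim x cP ∘ ⇑finSumFinEquiv.symm) i : ↥(Pset L C P)) : C))
        ∘ ⇑finSumFinEquiv) = Sum.elim (fun i => ((x i : C))) c := by
      funext v
      rw [Function.comp_apply, Function.comp_apply, Equiv.symm_apply_apply]
      cases v <;> rfl
    rw [e2]
    constructor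
    · intro hx
      exact ⟨fun i => ((Sum.elim x cP ∘ ⇑finSumFinEquiv.symm) i).2,
        (hθ' (fun i => ((x i : C))) (fun i => (x i).2)).mp hx⟩
    · rintro ⟨-, h2'⟩
      exact (hθ' (fun i => ((x i : C))) (fun i => (x i).2)).mpr h2'
  -- Step E : elimination of imaginaries
  obtain ⟨l₀, φ₀, c₀, hdef, huniq⟩ := hEI k X ⟨l, θ''', cP, hXdef⟩
  -- Step G : each component of the code is in dcl(A ∪ range a)
  set φ₀C : L.Formula (Fin k ⊕ Fin l₀) := relToP (n := 0) P φ₀ with hφ₀C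
  set gψ : (Fin k ⊕ Fin m) → (Fin k ⊕ ((Fin 1 ⊕ Fin m) ⊕ Fin l₀)) :=
    Sum.elim Sum.inl (fun y => Sum.inr (Sum.inl (Sum.inr y))) with hgψ
  set gφ : (Fin k ⊕ Fin l₀) → (Fin k ⊕ ((Fin 1 ⊕ Fin m) ⊕ Fin l₀)) :=
    Sum.elim Sum.inl (fun z => Sum.inr (Sum.inr z)) with hgφ
  set inner : L.Formula (Fin k ⊕ ((Fin 1 ⊕ Fin m) ⊕ Fin l₀)) :=
    (ψ.relabel gψ).iff (Formula.relabel gφ φ₀C) with hinner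
  have hc0A : ∀ j : Fin l₀, ((c₀ j : C)) ∈ Pset L C P ∩ A := by
    intro j
    set body : L.Formula ((Fin 1 ⊕ Fin m) ⊕ Fin l₀) :=
      (Tools.pAllP P k inner) ⊓
        (Term.equal (Term.var (Sum.inl (Sum.inl 0))) (Term.var (Sum.inr j))) with hbody
    set δ : L.Formula (Fin 1 ⊕ Fin m) :=
      Tools.pExP P l₀ (body.relabel (Sum.elim Sum.inr Sum.inl)) with hδ
    -- characterization of realizing δ
    have hδreal : ∀ v : C, δ.Realize (Sum.elim (fun _ : Fin 1 => v) b) ↔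
        (∃ w' : Fin l₀ → C, (∀ i, w' i ∈ Pset L C P) ∧
          (∀ x : Fin k → C, (∀ i, x i ∈ Pset L C P) →
            (ψ.Realize (Sum.elim x b) ↔ φ₀C.Realize (Sum.elim x w'))) ∧
          v = w' j) := by
      intro v
      rw [hδ, Tools.realize_pExP]
      apply exists_congr
      intro w'
      apply and_congr_right'
      rw [Formula.realize_relabel]
      have he : (Sum.elim w' (Sum.elim (fun _ : Fin 1 => v) b)) ∘ (Sum.elim Sum.inr Sum.inl) =
          Sum.elim (Sum.elim (fun _ : Fin 1 => v) b) w' := by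
        funext u; cases u <;> rfl
      rw [he, hbody, Formula.realize_inf, Tools.realize_pAllP]
      apply and_congr
      · apply forall_congr'
        intro x
        apply imp_congr_right
        intro hx
        rw [hinner, Formula.realize_iff, Formula.realize_relabel, Formula.realize_relabel]
        have e1 : (Sum.elim x (Sum.elim (Sum.elim (fun _ : Fin 1 => v) b) w')) ∘ gψ =
            Sum.elim x b := by
          funext u; cases u <;> rfl
        have e2 : (Sum.elim x (Sum.elim (Sum.elim (fun _ : Fin 1 => v) b) w')) ∘ gφ =
            Sum.elim x w' := by
          funext u; cases u <;> rfl
        rw [e1, e2]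
      · rw [Formula.realize_equal]
        exact Iff.rfl
    rw [← hd]
    refine ⟨⟨m, δ, fun i => ⟨b i, hb i⟩, ?_, ?_⟩, (c₀ j).2⟩
    · -- existence
      show δ.Realize (Sum.elim (fun _ : Fin 1 => ((c₀ j : C))) b)
      rw [hδreal]
      refine ⟨fun j' => ((c₀ j' : C)), fun j' => (c₀ j').2, ?_, rfl⟩
      intro x hx
      have hXx := hdef (fun i => ⟨x i, hx i⟩)
      have hXeq : ((fun i => (⟨x i, hx i⟩ : ↥(Pset L C P))) ∈ X) =
          ψ.Realize (Sum.elim x b) := rfl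
      rw [hXeq] at hXx
      rw [hXx, Tools.realizeIn_iff_relToP]
      have e3 : (fun a' => ((Sum.elim (fun i => (⟨x i, hx i⟩ : ↥(Pset L C P))) c₀ a' :
            ↥(Pset L C P)) : C)) =
          Sum.elim x (fun j' => ((c₀ j' : C))) := by
        funext u; cases u <;> rfl
      rw [e3]
    · -- uniqueness
      intro v' hv'
      have hv'' : δ.Realize (Sum.elim (fun _ : Fin 1 => v') b) := hv'
      rw [hδreal] at hv''
      obtain ⟨w', hw'P, hprop, rfl⟩ := hv''
      set c' : Fin l₀ → ↥(Pset L C P) := fun j' => ⟨w' j', hw'P j'⟩ with hc'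
      have : c' = c₀ := by
        apply huniq
        intro x
        have hXeq : (x ∈ X) = ψ.Realize (Sum.elim (fun i => ((x i : C))) b) := rfl
        rw [hXeq, hprop (fun i => ((x i : C))) (fun i => (x i).2),
          Tools.realizeIn_iff_relToP]
        have e3 : (fun a' => ((Sum.elim x c' a' : ↥(Pset L C P)) : C)) =
            Sum.elim (fun i => ((x i : C))) w' := by
          funext u; cases u <;> rfl
        rw [e3]
      have := congrFun this j
      exact congrArg Subtype.val this
  -- Step H : produce a witness in P ∩ A
  obtain ⟨hsub, helem⟩ := hPA
  set c₀A : Fin l₀ → ↥(Pset L C P ∩ A) := fun j => ⟨(c₀ j : C), hc0A j⟩ with hc₀A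
  set x0P : Fin k → ↥(Pset L C P) := fun i => ⟨x0 i, hx0P i⟩ with hx0Pdef
  have hX0 : x0P ∈ X := by
    show ψ.Realize (Sum.elim (fun i => ((x0P i : C))) b)
    exact hx0r
  have hξ0 : RealizeIn L C (Pset L C P) φ₀ (Sum.elim x0P c₀) := (hdef x0P).mp hX0
  set ξ : L.Formula (Fin l₀) :=
    Formula.iExs (Fin k) (φ₀.relabel (Sum.elim Sum.inr Sum.inl : Fin k ⊕ Fin l₀ → Fin l₀ ⊕ Fin k)) with hξ
  have hξP : RealizeIn L C (Pset L C P) ξ c₀ := by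
    rw [hξ, Tools.realizeIn_iExs]
    refine ⟨x0P, ?_⟩
    have he : (fun a' => Sum.elim c₀ x0P ((Sum.elim Sum.inr Sum.inl :
        Fin k ⊕ Fin l₀ → Fin l₀ ⊕ Fin k) a')) = Sum.elim x0P c₀ := by
      funext u; cases u <;> rfl
    rw [he]
    exact hξ0
  have hlow : RealizeIn L C (Pset L C P ∩ A) ξ c₀A := by
    rw [helem l₀ ξ c₀A]
    have he : (fun i => (⟨((c₀A i : C)), hsub (c₀A i).2⟩ : ↥(Pset L C P))) = c₀ := by
      funext i
      exact Subtype.ext rfl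
    rw [he]
    exact hξP
  rw [hξ, Tools.realizeIn_iExs] at hlow
  obtain ⟨g', hg'⟩ := hlow
  have he2 : (fun a' => Sum.elim c₀A g' ((Sum.elim Sum.inr Sum.inl :
      Fin k ⊕ Fin l₀ → Fin l₀ ⊕ Fin k) a')) = Sum.elim g' c₀A := by
    funext u; cases u <;> rfl
  rw [he2] at hg'
  -- transfer the witness up to P^C
  have hup : RealizeIn L C (Pset L C P) φ₀
      (Sum.elim (fun i => (⟨(g' i : C), hsub (g' i).2⟩ : ↥(Pset L C P))) c₀) := by
    have hpack := helem (k + l₀) (φ₀.relabel ⇑finSumFinEquiv)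
      ((Sum.elim g' c₀A) ∘ ⇑finSumFinEquiv.symm)
    rw [Tools.realizeIn_relabel, Tools.realizeIn_relabel] at hpack
    have e4 : ((Sum.elim g' c₀A ∘ ⇑finSumFinEquiv.symm) ∘ ⇑finSumFinEquiv) =
        Sum.elim g' c₀A := by
      funext u
      rw [Function.comp_apply, Function.comp_apply, Equiv.symm_apply_apply]
    have e5 : ((fun i => (⟨(((Sum.elim g' c₀A ∘ ⇑finSumFinEquiv.symm) i : ↥(Pset L C P ∩ A)) : C),
        hsub ((Sum.elim g' c₀A ∘ ⇑finSumFinEquiv.symm) i).2⟩ : ↥(Pset L C P)))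
          ∘ ⇑finSumFinEquiv) =
        Sum.elim (fun i => (⟨(g' i : C), hsub (g' i).2⟩ : ↥(Pset L C P))) c₀ := by
      funext u
      rw [Function.comp_apply]
      have key : ∀ z : Fin k ⊕ Fin l₀,
          (⟨(((Sum.elim g' c₀A ∘ ⇑finSumFinEquiv.symm) (finSumFinEquiv z) :
              ↥(Pset L C P ∩ A)) : C),
            hsub ((Sum.elim g' c₀A ∘ ⇑finSumFinEquiv.symm) (finSumFinEquiv z)).2⟩ :
            ↥(Pset L C P)) =
          (⟨((Sum.elim g' c₀A z : ↥(Pset L C P ∩ A)) : C),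
            hsub (Sum.elim g' c₀A z).2⟩ : ↥(Pset L C P)) := by
        intro z
        apply Subtype.ext
        show ((Sum.elim g' c₀A (finSumFinEquiv.symm (finSumFinEquiv z)) : ↥(Pset L C P ∩ A)) : C)
          = _
        rw [Equiv.symm_apply_apply]
      rw [key u]
      cases u with
      | inl i => exact Subtype.ext rfl
      | inr i => exact Subtype.ext rfl
    rw [e4, e5] at hpack
    rw [← hpack]
    exact hg'
  have hwit : (fun i => (⟨(g' i : C), hsub (g' i).2⟩ : ↥(Pset L C P))) ∈ X :=
    (hdef _).mpr hup
  refine ⟨fun i => (g' i : C), fun i => ⟨(g' i).2.1, Or.inl (g' i).2.2⟩, ?_⟩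
  exact hwit

lemma acl_sub {A : Set C} {n : ℕ} (a c : Fin n → C)
    (tpc : typeOf L C A a = typeOf L C A c)
    (hPc : Pset L C P ∩ (A ∪ Set.range c) = Pset L C P ∩ A)
    (hCc : IsComplete L C P (A ∪ Set.range c)) :
    aclSet L C (A ∪ Set.range a) ∩ Pset L C P ⊆ Pset L C P ∩ A := by
  -- type transfer principle
  have htp : ∀ (m' : ℕ) (χ : L.Formula (Fin n ⊕ Fin m')) (q : Fin m' → ↥A),
      (χ.Realize (Sum.elim a (fun i => (q i : C))) ↔
        χ.Realize (Sum.elim c (fun i => (q i : C)))) := by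
    intro m' χ q
    constructor
    · intro h
      have hmem : (⟨m', χ, q⟩ : FormulaOver L C A n) ∈ typeOf L C A a := h
      rw [tpc] at hmem
      exact hmem
    · intro h
      have hmem : (⟨m', χ, q⟩ : FormulaOver L C A n) ∈ typeOf L C A c := h
      rw [← tpc] at hmem
      exact hmem
  rintro d ⟨⟨k, φ, prms, hφ, hfin⟩, hdP⟩
  rcases Set.eq_empty_or_nonempty A with hAe | ⟨a₀, ha₀⟩
  · -- A empty : derive a contradiction
    exfalso
    obtain ⟨e, he, -⟩ := hCc 1 0 (Term.equal (Term.var (Sum.inl 0)) (Term.var (Sum.inl 0)))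
      (fun i => i.elim0) (fun i => i.elim0)
      ⟨fun _ => d, fun _ => hdP, by rw [Formula.realize_equal]⟩
    have := he 0
    rw [hPc, hAe] at this
    exact this.2.elim
  -- main case
  have hρex : ∀ i : Fin k, ∃ r : ↥A ⊕ Fin n,
      Sum.elim (fun u : ↥A => (u : C)) a r = (prms i : C) := by
    intro i
    rcases (prms i).2 with h | ⟨j, hj⟩
    · exact ⟨Sum.inl ⟨_, h⟩, rfl⟩
    · exact ⟨Sum.inr j, hj⟩
  choose ρ hρspec using hρex
  set bA : Fin k → C := fun i => ((prms i : C)) with hbA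
  set bC : Fin k → C := fun i => Sum.elim (fun u : ↥A => (u : C)) c (ρ i) with hbC
  have hbAρ : ∀ i, Sum.elim (fun u : ↥A => (u : C)) a (ρ i) = bA i := hρspec
  set S : Set C := { b' | φ.Realize (Sum.elim (fun _ => b') bA) } with hS
  have hSfin : S.Finite := hfin
  set SP := S ∩ Pset L C P with hSP
  have hSPfin : SP.Finite := hSfin.inter_of_left _
  set F := hSPfin.toFinset with hF
  set t := F.card with ht
  set w : Fin t → C := fun i => ((F.equivFin.symm i : ↥F) : C) with hw
  have hwmem : ∀ i, w i ∈ SP := by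
    intro i
    have h0 := (F.equivFin.symm i).2
    exact (hSPfin.mem_toFinset).mp h0
  have hwinj : Function.Injective w := by
    intro i j hij
    have := Subtype.ext hij
    exact F.equivFin.symm.injective this
  set a₀A : ↥A := ⟨a₀, ha₀⟩ with ha₀A
  set pA : Fin k → ↥A := fun i => Sum.elim id (fun _ => a₀A) (ρ i) with hpA
  set g₁ : Fin k → (Fin n ⊕ Fin k) :=
    fun i => Sum.elim (fun _ : ↥A => Sum.inr i) Sum.inl (ρ i) with hg₁
  set Θ₁ : L.Formula (Fin k) := Tools.pExP P t (Tools.distinctφ t k φ) with hΘ₁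
  set χ₁ : L.Formula (Fin n ⊕ Fin k) := Θ₁.relabel g₁ with hχ₁
  -- the composition computations
  have hcompa : (Sum.elim a (fun i => ((pA i : C)))) ∘ g₁ = bA := by
    funext i
    rw [Function.comp_apply, hg₁]
    rcases hρi : ρ i with u | j
    · have := hbAρ i
      rw [hρi] at this
      simpa [hpA, hρi] using this
    · have := hbAρ i
      rw [hρi] at this
      simpa [hpA, hρi] using this
  have hcompc : (Sum.elim c (fun i => ((pA i : C)))) ∘ g₁ = bC := by
    funext i
    rw [Function.comp_apply, hg₁, hbC]
    rcases hρi : ρ i with u | j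
    · simp [hpA, hρi]
    · simp [hpA, hρi]
  -- a realizes χ₁
  have hra : χ₁.Realize (Sum.elim a (fun i => ((pA i : C)))) := by
    rw [hχ₁, Formula.realize_relabel, hcompa, hΘ₁, Tools.realize_pExP]
    refine ⟨w, fun i => (hwmem i).2, ?_⟩
    rw [Tools.realize_distinctφ]
    constructor
    · intro i
      exact (hwmem i).1
    · intro i j hij h
      exact hij (hwinj h)
  -- transfer to c
  have hrc := (htp k χ₁ pA).mp hra
  rw [hχ₁, Formula.realize_relabel, hcompc, hΘ₁, Tools.realize_pExP] at hrc
  obtain ⟨z, hzP, hzr⟩ := hrc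
  -- completeness over A ∪ range c
  have hbCmem : ∀ i, bC i ∈ A ∪ Set.range c := by
    intro i
    show Sum.elim (fun u : ↥A => (u : C)) c (ρ i) ∈ A ∪ Set.range c
    rcases hρi : ρ i with u | j
    · exact Or.inl u.2
    · exact Or.inr ⟨j, rfl⟩
  obtain ⟨e, he, hre⟩ := hCc t k (Tools.distinctφ t k φ) bC hbCmem ⟨z, hzP, hzr⟩
  have heA : ∀ i, e i ∈ Pset L C P ∩ A := by
    intro i
    rw [← hPc]
    exact he i
  -- transfer back to a
  set g₂ : (Fin t ⊕ Fin k) → (Fin n ⊕ Fin (t + k)) :=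
    Sum.elim (fun z => Sum.inr (finSumFinEquiv (Sum.inl z)))
      (fun i => Sum.elim (fun _ : ↥A => Sum.inr (finSumFinEquiv (Sum.inr i))) Sum.inl (ρ i))
      with hg₂
  set q : Fin (t + k) → ↥A :=
    fun u => Sum.elim (fun z => (⟨e z, (heA z).2⟩ : ↥A)) pA (finSumFinEquiv.symm u) with hq
  set χ₂ : L.Formula (Fin n ⊕ Fin (t + k)) := (Tools.distinctφ t k φ).relabel g₂ with hχ₂
  have hcompa2 : (Sum.elim a (fun i => ((q i : C)))) ∘ g₂ = Sum.elim e bA := by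
    funext v
    rcases v with z | i
    · simp [hg₂, hq, Equiv.symm_apply_apply]
    · rw [Function.comp_apply]
      rcases hρi : ρ i with u | j
      · have := hbAρ i
        rw [hρi] at this
        simpa [hg₂, hq, hρi, hpA, Equiv.symm_apply_apply] using this
      · have := hbAρ i
        rw [hρi] at this
        simpa [hg₂, hρi] using this
  have hcompc2 : (Sum.elim c (fun i => ((q i : C)))) ∘ g₂ = Sum.elim e bC := by
    funext v
    rcases v with z | i
    · simp [hg₂, hq, Equiv.symm_apply_apply]
    · rw [Function.comp_apply, hbC]
      rcases hρi : ρ i with u | j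
      · simp [hg₂, hq, hρi, hpA, Equiv.symm_apply_apply]
      · simp [hg₂, hρi]
  have hrc2 : χ₂.Realize (Sum.elim c (fun i => ((q i : C)))) := by
    rw [hχ₂, Formula.realize_relabel, hcompc2]
    exact hre
  have hra2 := (htp (t + k) χ₂ q).mpr hrc2
  rw [hχ₂, Formula.realize_relabel, hcompa2, Tools.realize_distinctφ] at hra2
  obtain ⟨hsolve, hdist⟩ := hra2
  have heinj : Function.Injective e := by
    intro i j hij
    by_contra hne
    exact hdist i j hne hij
  have hesub : Set.range e ⊆ SP := by
    rintro x ⟨i, rfl⟩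
    exact ⟨hsolve i, (heA i).1⟩
  have hecard : (Set.range e).ncard = t := by
    rw [← Set.image_univ, Set.ncard_image_of_injective _ heinj, Set.ncard_univ,
      Nat.card_eq_fintype_card, Fintype.card_fin]
  have hSPcard : SP.ncard = t := by
    rw [Set.ncard_eq_toFinset_card _ hSPfin]
  have hrange : Set.range e = SP := by
    apply Set.eq_of_subset_of_ncard_le hesub _ hSPfin
    rw [hecard, hSPcard]
  have hdSP : d ∈ SP := ⟨hφ, hdP⟩
  rw [← hrange] at hdSP
  obtain ⟨i, rfl⟩ := hdSP
  exact heA i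

end MainHelpers

/-- Assume `T^P` eliminates imaginaries, `P^A ≺ P^C`, and let `a` be a
tuple.  Then: `A` is complete and `tp(a/A) ∈ S_*(A)` iff `dcl(A ∪ a) ∩ P^C = P^A` iff
`acl(A ∪ a) ∩ P^C = P^A`. -/
theorem star_types_via_dcl_acl
    (h1 : Hypothesis1 L C P)
    (hEI : EliminatesImaginariesP L C P)
    (A : Set C) (hPA : ElemSubset L C (Pset L C P ∩ A) (Pset L C P))
    (n : ℕ) (a : Fin n → C) :
    ((IsComplete L C P A ∧ typeOf L C A a ∈ SStar L C P A n) ↔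
        dclSet L C (A ∪ Set.range a) ∩ Pset L C P = Pset L C P ∩ A) ∧
    ((IsComplete L C P A ∧ typeOf L C A a ∈ SStar L C P A n) ↔
        aclSet L C (A ∪ Set.range a) ∩ Pset L C P = Pset L C P ∩ A) := by
  have h13 : (IsComplete L C P A ∧ typeOf L C A a ∈ SStar L C P A n) →
      aclSet L C (A ∪ Set.range a) ∩ Pset L C P = Pset L C P ∩ A := by
    rintro ⟨-, c, tpc, hPc, hCc⟩
    apply Set.Subset.antisymm
    · exact acl_sub a c tpc hPc hCc
    · rintro x ⟨hxP, hxA⟩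
      exact ⟨dclSet_subset_aclSet (mem_dclSet_of_mem (Or.inl hxA)), hxP⟩
  have h32 : aclSet L C (A ∪ Set.range a) ∩ Pset L C P = Pset L C P ∩ A →
      dclSet L C (A ∪ Set.range a) ∩ Pset L C P = Pset L C P ∩ A := by
    intro h
    apply Set.Subset.antisymm
    · rintro x ⟨hx1, hx2⟩
      rw [← h]
      exact ⟨dclSet_subset_aclSet hx1, hx2⟩
    · rintro x ⟨hxP, hxA⟩
      exact ⟨mem_dclSet_of_mem (Or.inl hxA), hxP⟩
  have h21 : dclSet L C (A ∪ Set.range a) ∩ Pset L C P = Pset L C P ∩ A →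
      (IsComplete L C P A ∧ typeOf L C A a ∈ SStar L C P A n) := by
    intro hd
    have hcompU := key_complete h1 hEI hPA hd
    have hPeq := inter_union_range (P := P) hd
    have hcompA : IsComplete L C P A := by
      intro k m ψ b hb hex
      obtain ⟨e, he, hr⟩ := hcompU k m ψ b (fun i => Or.inl (hb i)) hex
      refine ⟨e, fun i => ?_, hr⟩
      rw [← hPeq]
      exact he i
    exact ⟨hcompA, a, rfl, hPeq, hcompU⟩
  exact ⟨⟨fun h => h32 (h13 h), h21⟩, ⟨h13, fun h => h21 (h32 h)⟩⟩

end OverPredicate
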